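/- Let B_3 be the quadratic cardinal B-spline (B_3 = B_2 ∗ B_1 where B_1 is the indicator of [0,1) and B_2 = B_1 ∗ B_1), and define the short-support quadratic spline wavelet ψ(x) = −(1/4) B_3(2x) + (3/4) B_3(2x−1) − (3/4) B_3(2x−2) + (1/4) B_3(2x−3), corresponding to the wavelet filter g = [−1/4, 3/4, −3/4, 1/4]. Then ψ has three vanishing moments: ∫_ℝ x^q ψ(x) dx = 0 for q = 0, 1, 2. -/

import Mathlib

open MeasureTheory

/-- The indicator function of `[0,1)`, i.e. the cardinal B-spline of order 1. -/
noncomputable def B1 : ℝ → ℝ := Set.indicator (Set.Ico (0 : ℝ) 1) (fun _ => (1 : ℝ))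

/-- Cardinal B-splines: `B 1 = B1` and `B (m+1) = B m ∗ B1` (Lebesgue convolution). -/
noncomputable def B : ℕ → ℝ → ℝ
  | 0 => fun _ => 0
  | 1 => B1
  | (m + 2) => fun x => ∫ t : ℝ, B (m + 1) (x - t) * B1 t

/-- The short-support quadratic spline wavelet, with filter `g = [−1/4, 3/4, −3/4, 1/4]`,
built from the quadratic cardinal B-spline `B 3`. -/
noncomputable def ψ : ℝ → ℝ := fun x =>
  -(1 / 4) * B 3 (2 * x) + (3 / 4) * B 3 (2 * x - 1) - (3 / 4) * B 3 (2 * x - 2) +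
    (1 / 4) * B 3 (2 * x - 3)

/-- A "nice" function: measurable, bounded by 1, supported in `Ico a b`. -/
def Nice (a b : ℝ) (f : ℝ → ℝ) : Prop :=
  Measurable f ∧ (∀ x, |f x| ≤ 1) ∧ ∀ x, x ∉ Set.Ico a b → f x = 0

lemma nice_B1 : Nice 0 1 B1 := by
  refine ⟨measurable_const.indicator measurableSet_Ico, ?_, ?_⟩
  · intro x
    by_cases h : x ∈ Set.Ico (0:ℝ) 1 <;> simp [B1, Set.indicator, h]
  · intro x hx; simp [B1, Set.indicator, hx]

lemma Nice.integrable_mul {a b : ℝ} {f : ℝ → ℝ} (hf : Nice a b f)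
    {g : ℝ → ℝ} (hg : Continuous g) : Integrable (fun x => g x * f x) := by
  obtain ⟨C, hC⟩ := (isCompact_Icc (a := a) (b := b)).exists_bound_of_continuousOn
    hg.continuousOn
  refine Integrable.mono' (g := (Set.Icc a b).indicator fun _ => C) ?_ ?_ ?_
  · exact (integrableOn_const measure_Icc_lt_top.ne).integrable_indicator
      measurableSet_Icc
  · exact (hg.measurable.mul hf.1).aestronglyMeasurable
  · refine Filter.Eventually.of_forall fun x => ?_
    by_cases hx : x ∈ Set.Icc a b
    · rw [Set.indicator_of_mem hx]
      have h1 := hC x hx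
      rw [Real.norm_eq_abs] at h1
      have h2 := hf.2.1 x
      have := abs_nonneg (g x)
      have := abs_nonneg (f x)
      calc ‖g x * f x‖ = |g x| * |f x| := abs_mul _ _
        _ ≤ C := by nlinarith
    · have : f x = 0 := hf.2.2 x (fun h => hx (Set.Ico_subset_Icc_self h))
      simp [this, Set.indicator_of_notMem hx]

lemma nice_prod_integrable {a b : ℝ} {f : ℝ → ℝ} (hf : Nice a b f)
    {g : ℝ → ℝ} (hg : Continuous g) :
    Integrable (Function.uncurry fun x t => g x * (f (x - t) * B1 t))
      (volume.prod volume) := by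
  obtain ⟨C, hC⟩ := (isCompact_Icc (a := a) (b := b + 1)).exists_bound_of_continuousOn
    hg.continuousOn
  have hs : MeasurableSet (Set.Icc a (b+1) ×ˢ Set.Icc (0:ℝ) 1) :=
    measurableSet_Icc.prod measurableSet_Icc
  refine Integrable.mono'
      (g := (Set.Icc a (b+1) ×ˢ Set.Icc (0:ℝ) 1).indicator fun _ => C) ?_ ?_ ?_
  · refine (integrableOn_const (ne_of_lt ?_)).integrable_indicator hs
    rw [Measure.prod_prod]
    exact ENNReal.mul_lt_top measure_Icc_lt_top measure_Icc_lt_top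
  · exact ((hg.measurable.comp measurable_fst).mul
      ((hf.1.comp (measurable_fst.sub measurable_snd)).mul
        (nice_B1.1.comp measurable_snd))).aestronglyMeasurable
  · refine Filter.Eventually.of_forall fun p => ?_
    by_cases hp : p ∈ Set.Icc a (b+1) ×ˢ Set.Icc (0:ℝ) 1
    · rw [Set.indicator_of_mem hp]
      have h1 := hC p.1 hp.1
      rw [Real.norm_eq_abs] at h1
      have h2 := hf.2.1 (p.1 - p.2)
      have h3 := nice_B1.2.1 p.2
      have := abs_nonneg (g p.1)
      have := abs_nonneg (f (p.1 - p.2))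
      have := abs_nonneg (B1 p.2)
      have h4 : |f (p.1 - p.2)| * |B1 p.2| ≤ 1 := by nlinarith
      have h5 : (0:ℝ) ≤ |f (p.1 - p.2)| * |B1 p.2| := by positivity
      calc ‖Function.uncurry (fun x t => g x * (f (x - t) * B1 t)) p‖
          = |g p.1| * (|f (p.1 - p.2)| * |B1 p.2|) := by
            simp [Function.uncurry, abs_mul]
        _ ≤ C := by nlinarith
    · rw [Set.indicator_of_notMem hp]
      have hz : f (p.1 - p.2) * B1 p.2 = 0 := by
        by_cases h2 : p.2 ∈ Set.Ico (0:ℝ) 1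
        · by_cases h1 : p.1 - p.2 ∈ Set.Ico a b
          · exact absurd ⟨⟨by linarith [h1.1, h2.1], by linarith [h1.2, h2.2]⟩,
              ⟨h2.1, h2.2.le⟩⟩ hp
          · rw [hf.2.2 _ h1, zero_mul]
        · rw [nice_B1.2.2 _ h2, mul_zero]
      simp [Function.uncurry, hz]

lemma int_B1 : ∫ x, B1 x = 1 := by
  rw [B1, integral_indicator measurableSet_Ico]
  simp

lemma mB1 (j : ℕ) : ∫ x, x ^ j * B1 x = ((j : ℝ) + 1)⁻¹ := by
  have h : (fun x : ℝ => x ^ j * B1 x) = (Set.Ico (0:ℝ) 1).indicator fun x => x ^ j := by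
    funext x
    by_cases hx : x ∈ Set.Ico (0:ℝ) 1 <;> simp [B1, Set.indicator, hx]
  rw [h, integral_indicator measurableSet_Ico,
    setIntegral_congr_set Ico_ae_eq_Ioc,
    ← intervalIntegral.integral_of_le zero_le_one, integral_pow]
  simp [div_eq_inv_mul]

lemma m1B1 : ∫ x, x * B1 x = 1/2 := by
  have := mB1 1; simp only [pow_one] at this; rw [this]; norm_num

lemma m2B1 : ∫ x, x ^ 2 * B1 x = 1/3 := by
  have := mB1 2; rw [this]; norm_num

/-- Linearity: integrating a quadratic against a nice function. -/
lemma Nice.quad {a b : ℝ} {f : ℝ → ℝ} (hf : Nice a b f) (c0 c1 c2 : ℝ) :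
    ∫ x, (c0 + c1 * x + c2 * x ^ 2) * f x
      = c0 * (∫ x, f x) + c1 * (∫ x, x * f x) + c2 * ∫ x, x ^ 2 * f x := by
  have i0 : Integrable (fun x : ℝ => c0 * f x) :=
    hf.integrable_mul (continuous_const : Continuous fun _ : ℝ => c0)
  have i1 : Integrable (fun x : ℝ => c1 * x * f x) :=
    hf.integrable_mul (continuous_const.mul continuous_id)
  have i2 : Integrable (fun x : ℝ => c2 * x ^ 2 * f x) :=
    hf.integrable_mul (continuous_const.mul (continuous_pow 2))
  have h : (fun x : ℝ => (c0 + c1 * x + c2 * x ^ 2) * f x)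
      = fun x => c0 * f x + (c1 * x * f x + c2 * x ^ 2 * f x) := by
    funext x; ring
  have i12 : Integrable (fun x : ℝ => c1 * x * f x + c2 * x ^ 2 * f x) := i1.add i2
  rw [h, integral_add i0 i12, integral_add i1 i2]
  simp_rw [mul_assoc]
  rw [integral_const_mul, integral_const_mul, integral_const_mul]
  ring

/-- Key Fubini step for the convolution with `B1`. -/
lemma Nice.key {a b : ℝ} {f : ℝ → ℝ} (hf : Nice a b f) {g : ℝ → ℝ} (hg : Continuous g) :
    ∫ x, g x * ∫ t, f (x - t) * B1 t = ∫ t, B1 t * ∫ x, g (x + t) * f x := by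
  have h1 : (fun x => g x * ∫ t, f (x - t) * B1 t)
      = fun x => ∫ t, g x * (f (x - t) * B1 t) := by
    funext x; rw [integral_const_mul]
  rw [h1, integral_integral_swap (nice_prod_integrable hf hg)]
  congr 1
  funext t
  have h2 : (fun x => g x * (f (x - t) * B1 t))
      = fun x => B1 t * ((fun y => g (y + t) * f y) (x - t)) := by
    funext x
    simp only []
    rw [sub_add_cancel]
    ring
  rw [h2, integral_const_mul, integral_sub_right_eq_self (fun y => g (y + t) * f y) t]

lemma Nice.conv {a b : ℝ} {f : ℝ → ℝ} (hf : Nice a b f) :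
    Nice a (b + 1) fun x => ∫ t, f (x - t) * B1 t := by
  refine ⟨?_, ?_, ?_⟩
  · have : StronglyMeasurable (Function.uncurry fun x t => f (x - t) * B1 t) :=
      ((hf.1.comp (measurable_fst.sub measurable_snd)).mul
        (nice_B1.1.comp measurable_snd)).stronglyMeasurable
    exact this.integral_prod_right.measurable
  · intro x
    have hb : ∀ t, ‖f (x - t) * B1 t‖ ≤ B1 t := by
      intro t
      have h1 := hf.2.1 (x - t)
      have h2 : 0 ≤ B1 t := by
        by_cases h : t ∈ Set.Ico (0:ℝ) 1 <;> simp [B1, Set.indicator, h]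
      calc ‖f (x - t) * B1 t‖ = |f (x - t)| * |B1 t| := abs_mul _ _
        _ = |f (x - t)| * B1 t := by rw [abs_of_nonneg h2]
        _ ≤ 1 * B1 t := by nlinarith [abs_nonneg (f (x - t))]
        _ = B1 t := one_mul _
    have hint : Integrable B1 := by
      have := nice_B1.integrable_mul (continuous_const : Continuous fun _ : ℝ => (1:ℝ))
      simpa using this
    calc |∫ t, f (x - t) * B1 t| ≤ ∫ t, B1 t := by
          refine norm_integral_le_of_norm_le hint (Filter.Eventually.of_forall hb)
      _ = 1 := int_B1
  · intro x hx
    have hz : ∀ t, f (x - t) * B1 t = 0 := by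
      intro t
      by_cases ht : t ∈ Set.Ico (0:ℝ) 1
      · have : x - t ∉ Set.Ico a b := by
          intro hmem
          exact hx ⟨by linarith [hmem.1, ht.1], by linarith [hmem.2, ht.2]⟩
        rw [hf.2.2 _ this, zero_mul]
      · rw [nice_B1.2.2 _ ht, mul_zero]
    simp only [hz, integral_zero]

lemma B2_eq : B 2 = fun x => ∫ t, B1 (x - t) * B1 t := rfl
lemma B3_eq : B 3 = fun x => ∫ t, B 2 (x - t) * B1 t := rfl

lemma nice_B2 : Nice 0 2 (B 2) := by
  have := nice_B1.conv
  rw [B2_eq]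
  norm_num at this ⊢
  exact this

lemma nice_B3 : Nice 0 3 (B 3) := by
  have := nice_B2.conv
  rw [B3_eq]
  norm_num at this ⊢
  exact this

lemma int_B2 : ∫ x, B 2 x = 1 := by
  have h := nice_B1.key (continuous_const : Continuous fun _ : ℝ => (1:ℝ))
  simp only [one_mul] at h
  rw [B2_eq]
  rw [h, int_B1]
  · simp [int_B1]

lemma m1B2 : ∫ x, x * B 2 x = 1 := by
  have h := nice_B1.key (g := fun y : ℝ => y) (by fun_prop)
  beta_reduce at h
  rw [B2_eq, h]
  have hin : ∀ t : ℝ, ∫ x, (x + t) * B1 x = t + 1/2 := by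
    intro t
    have : (fun x : ℝ => (x + t) * B1 x) = fun x => (t + 1 * x + 0 * x ^ 2) * B1 x := by
      funext x; ring
    rw [this, nice_B1.quad, int_B1, m1B1, m2B1]; ring
  simp only [hin]
  have : (fun t : ℝ => B1 t * (t + 1/2)) = fun t => (1/2 + 1 * t + 0 * t ^ 2) * B1 t := by
    funext t; ring
  rw [this, nice_B1.quad, int_B1, m1B1, m2B1]; ring

lemma m2B2 : ∫ x, x ^ 2 * B 2 x = 7/6 := by
  have h := nice_B1.key (g := fun y : ℝ => y ^ 2) (by fun_prop)
  beta_reduce at h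
  rw [B2_eq, h]
  have hin : ∀ t : ℝ, ∫ x, (x + t) ^ 2 * B1 x = t ^ 2 + t + 1/3 := by
    intro t
    have : (fun x : ℝ => (x + t) ^ 2 * B1 x)
        = fun x => (t ^ 2 + 2 * t * x + 1 * x ^ 2) * B1 x := by
      funext x; ring
    rw [this, nice_B1.quad, int_B1, m1B1, m2B1]; ring
  simp only [hin]
  have : (fun t : ℝ => B1 t * (t ^ 2 + t + 1/3))
      = fun t => (1/3 + 1 * t + 1 * t ^ 2) * B1 t := by
    funext t; ring
  rw [this, nice_B1.quad, int_B1, m1B1, m2B1]; ring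

lemma int_B3 : ∫ x, B 3 x = 1 := by
  have h := nice_B2.key (continuous_const : Continuous fun _ : ℝ => (1:ℝ))
  simp only [one_mul] at h
  rw [B3_eq, h, int_B2]
  simp [int_B1]

lemma m1B3 : ∫ x, x * B 3 x = 3/2 := by
  have h := nice_B2.key (g := fun y : ℝ => y) (by fun_prop)
  beta_reduce at h
  rw [B3_eq, h]
  have hin : ∀ t : ℝ, ∫ x, (x + t) * B 2 x = t + 1 := by
    intro t
    have : (fun x : ℝ => (x + t) * B 2 x) = fun x => (t + 1 * x + 0 * x ^ 2) * B 2 x := by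
      funext x; ring
    rw [this, nice_B2.quad, int_B2, m1B2, m2B2]; ring
  simp only [hin]
  have : (fun t : ℝ => B1 t * (t + 1)) = fun t => (1 + 1 * t + 0 * t ^ 2) * B1 t := by
    funext t; ring
  rw [this, nice_B1.quad, int_B1, m1B1, m2B1]; ring

lemma m2B3 : ∫ x, x ^ 2 * B 3 x = 5/2 := by
  have h := nice_B2.key (g := fun y : ℝ => y ^ 2) (by fun_prop)
  beta_reduce at h
  rw [B3_eq, h]
  have hin : ∀ t : ℝ, ∫ x, (x + t) ^ 2 * B 2 x = t ^ 2 + 2 * t + 7/6 := by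
    intro t
    have : (fun x : ℝ => (x + t) ^ 2 * B 2 x)
        = fun x => (t ^ 2 + 2 * t * x + 1 * x ^ 2) * B 2 x := by
      funext x; ring
    rw [this, nice_B2.quad, int_B2, m1B2, m2B2]; ring
  simp only [hin]
  have : (fun t : ℝ => B1 t * (t ^ 2 + 2 * t + 7/6))
      = fun t => (7/6 + 2 * t + 1 * t ^ 2) * B1 t := by
    funext t; ring
  rw [this, nice_B1.quad, int_B1, m1B1, m2B1]; ring

/-- Substitution `x ↦ 2x - k`. -/
lemma subst_half (g : ℝ → ℝ) (k : ℝ) : ∫ x, g (2 * x - k) = (1/2) * ∫ x, g x := by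
  have h : (fun x : ℝ => g (2 * x - k)) = fun x => (fun y => g (y - k)) (2 * x) := rfl
  rw [h, MeasureTheory.Measure.integral_comp_mul_left (fun y => g (y - k)) 2,
    integral_sub_right_eq_self g k]
  norm_num

lemma nice_scaled (k : ℝ) : Nice (k/2) ((k+3)/2) fun x => B 3 (2 * x - k) := by
  refine ⟨nice_B3.1.comp (by fun_prop), fun x => nice_B3.2.1 _, ?_⟩
  intro x hx
  refine nice_B3.2.2 _ fun hmem => hx ?_
  exact ⟨by linarith [hmem.1], by linarith [hmem.2]⟩

lemma I0 (k : ℝ) : ∫ x, B 3 (2 * x - k) = 1/2 := by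
  rw [subst_half (B 3) k, int_B3]; norm_num

lemma I1 (k : ℝ) : ∫ x, x * B 3 (2 * x - k) = (3/2 + k)/4 := by
  have h : (fun x : ℝ => x * B 3 (2 * x - k))
      = fun x => (fun y => (y + k)/2 * B 3 y) (2 * x - k) := by
    funext x
    simp only []
    rw [show (2 * x - k + k)/2 = x by ring]
  rw [h, subst_half (fun y => (y + k)/2 * B 3 y) k]
  have h2 : (fun y : ℝ => (y + k)/2 * B 3 y)
      = fun y => (k/2 + (1/2) * y + 0 * y ^ 2) * B 3 y := by
    funext y; ring
  rw [h2, nice_B3.quad, int_B3, m1B3, m2B3]; ring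

lemma I2 (k : ℝ) : ∫ x, x ^ 2 * B 3 (2 * x - k) = (5/2 + 3*k + k^2)/8 := by
  have h : (fun x : ℝ => x ^ 2 * B 3 (2 * x - k))
      = fun x => (fun y => ((y + k)/2) ^ 2 * B 3 y) (2 * x - k) := by
    funext x
    simp only []
    rw [show (2 * x - k + k)/2 = x by ring]
  rw [h, subst_half (fun y => ((y + k)/2) ^ 2 * B 3 y) k]
  have h2 : (fun y : ℝ => ((y + k)/2) ^ 2 * B 3 y)
      = fun y => (k^2/4 + (k/2) * y + (1/4) * y ^ 2) * B 3 y := by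
    funext y; ring
  rw [h2, nice_B3.quad, int_B3, m1B3, m2B3]; ring

lemma integral_psi_eq (g : ℝ → ℝ) (hg : Continuous g) (J : ℝ → ℝ)
    (hJ : ∀ k : ℝ, ∫ x, g x * B 3 (2 * x - k) = J k) :
    ∫ x, g x * ψ x = -(1/4) * J 0 + (3/4) * J 1 - (3/4) * J 2 + (1/4) * J 3 := by
  have hint : ∀ k : ℝ, Integrable fun x => g x * B 3 (2 * x - k) := fun k =>
    (nice_scaled k).integrable_mul hg
  have hint0 : Integrable fun x => g x * B 3 (2 * x) := by
    have := hint 0; simpa using this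
  have hJ0 : ∫ x, g x * B 3 (2 * x) = J 0 := by
    have := hJ 0; simpa using this
  have h : (fun x => g x * ψ x)
      = fun x => -(1/4) * (g x * B 3 (2 * x))
          + ((3/4) * (g x * B 3 (2 * x - 1))
          + (-(3/4) * (g x * B 3 (2 * x - 2)) + (1/4) * (g x * B 3 (2 * x - 3)))) := by
    funext x; simp only [ψ]; ring
  have i3 : Integrable (fun x : ℝ => -(3/4) * (g x * B 3 (2 * x - 2)) + (1/4) * (g x * B 3 (2 * x - 3))) :=
    ((hint 2).const_mul _).add ((hint 3).const_mul _)
  have i23 : Integrable (fun x : ℝ => (3/4) * (g x * B 3 (2 * x - 1)) +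
      (-(3/4) * (g x * B 3 (2 * x - 2)) + (1/4) * (g x * B 3 (2 * x - 3)))) :=
    ((hint 1).const_mul _).add i3
  rw [h, integral_add (hint0.const_mul _) i23,
    integral_add ((hint 1).const_mul _) i3,
    integral_add ((hint 2).const_mul _) ((hint 3).const_mul _),
    integral_const_mul, integral_const_mul, integral_const_mul, integral_const_mul,
    hJ0, hJ 1, hJ 2, hJ 3]
  ring

/-- The short-support quadratic spline wavelet has three vanishing moments. -/
theorem short3_vanishing_moments :
    ∀ q : ℕ, q ≤ 2 → (∫ x : ℝ, x ^ q * ψ x) = 0 := by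
  intro q hq
  interval_cases q
  · rw [integral_psi_eq (fun x : ℝ => x ^ 0) (by continuity) (fun _ => 1/2)
      (fun k => by simpa using I0 k)]
    norm_num
  · rw [integral_psi_eq (fun x : ℝ => x ^ 1) (by continuity) (fun k => (3/2 + k)/4)
      (fun k => by simpa using I1 k)]
    norm_num
  · rw [integral_psi_eq (fun x : ℝ => x ^ 2) (by continuity) (fun k => (5/2 + 3*k + k^2)/8)
      (fun k => I2 k)]
    norm_num
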